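/- The modular commutator is additive under tensor products: if ρ is a positive definite density matrix on H_A ⊗ H_B ⊗ H_C and λ is a positive definite density matrix on H_{A'} ⊗ H_{B'} ⊗ H_{C'}, then for the state ρ ⊗ λ on the composite system, J(AA', BB', CC')_{ρ⊗λ} = J(A,B,C)_ρ + J(A',B',C')_λ. -/

import Mathlib

open scoped ComplexOrder

noncomputable section

namespace ModularCommutator

open Matrix Complex

/-- Matrix logarithm of a Hermitian matrix, defined through the spectral theorem
(junk value `0` on non-Hermitian matrices). -/
noncomputable def mlog {n : Type} [Fintype n] [DecidableEq n] (M : Matrix n n ℂ) :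
    Matrix n n ℂ :=
  if h : M.IsHermitian then
    (h.eigenvectorUnitary : Matrix n n ℂ) *
      Matrix.diagonal (fun i => (Real.log (h.eigenvalues i) : ℂ)) *
      (star (h.eigenvectorUnitary : Matrix n n ℂ))
  else 0

variable {A B C : Type} [Fintype A] [DecidableEq A] [Fintype B] [DecidableEq B]
  [Fintype C] [DecidableEq C]

/-- Partial trace onto the factors `A ⊗ B`. -/
def ptAB (ρ : Matrix (A × B × C) (A × B × C) ℂ) : Matrix (A × B) (A × B) ℂ :=
  fun p q => ∑ c : C, ρ (p.1, p.2, c) (q.1, q.2, c)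

/-- Partial trace onto the factors `B ⊗ C`. -/
def ptBC (ρ : Matrix (A × B × C) (A × B × C) ℂ) : Matrix (B × C) (B × C) ℂ :=
  fun p q => ∑ a : A, ρ (a, p.1, p.2) (a, q.1, q.2)

/-- Partial trace onto the factors `A ⊗ C`. -/
def ptAC (ρ : Matrix (A × B × C) (A × B × C) ℂ) : Matrix (A × C) (A × C) ℂ :=
  fun p q => ∑ b : B, ρ (p.1, b, p.2) (q.1, b, q.2)

/-- Partial trace onto the factor `A`. -/
def ptA (ρ : Matrix (A × B × C) (A × B × C) ℂ) : Matrix A A ℂ :=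
  fun a a' => ∑ b : B, ∑ c : C, ρ (a, b, c) (a', b, c)

/-- Partial trace onto the factor `B`. -/
def ptB (ρ : Matrix (A × B × C) (A × B × C) ℂ) : Matrix B B ℂ :=
  fun b b' => ∑ a : A, ∑ c : C, ρ (a, b, c) (a, b', c)

/-- Partial trace onto the factor `C`. -/
def ptC (ρ : Matrix (A × B × C) (A × B × C) ℂ) : Matrix C C ℂ :=
  fun c c' => ∑ a : A, ∑ b : B, ρ (a, b, c) (a, b, c')

/-- Extension of an operator on `A ⊗ B` by the identity on `C`. -/
def embAB (M : Matrix (A × B) (A × B) ℂ) : Matrix (A × B × C) (A × B × C) ℂ :=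
  fun x y => if x.2.2 = y.2.2 then M (x.1, x.2.1) (y.1, y.2.1) else 0

/-- Extension of an operator on `B ⊗ C` by the identity on `A`. -/
def embBC (M : Matrix (B × C) (B × C) ℂ) : Matrix (A × B × C) (A × B × C) ℂ :=
  fun x y => if x.1 = y.1 then M x.2 y.2 else 0

/-- Extension of an operator on `B` by the identity on `A ⊗ C`. -/
def embB (M : Matrix B B ℂ) : Matrix (A × B × C) (A × B × C) ℂ :=
  fun x y => if x.1 = y.1 ∧ x.2.2 = y.2.2 then M x.2.1 y.2.1 else 0

/-- The modular Hamiltonian `K_{AB}(ρ) = −ln ρ_{AB}`, extended by the identity on `C`. -/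
def KAB (ρ : Matrix (A × B × C) (A × B × C) ℂ) : Matrix (A × B × C) (A × B × C) ℂ :=
  embAB (-(mlog (ptAB ρ)))

/-- The modular Hamiltonian `K_{BC}(ρ) = −ln ρ_{BC}`, extended by the identity on `A`. -/
def KBC (ρ : Matrix (A × B × C) (A × B × C) ℂ) : Matrix (A × B × C) (A × B × C) ℂ :=
  embBC (-(mlog (ptBC ρ)))

/-- The modular commutator `J(A,B,C)_ρ = i · Tr(ρ [K_{AB}(ρ), K_{BC}(ρ)])`. -/
def Jmod (ρ : Matrix (A × B × C) (A × B × C) ℂ) : ℂ :=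
  Complex.I * (ρ * (KAB ρ * KBC ρ - KBC ρ * KAB ρ)).trace

variable {A' B' C' : Type} [Fintype A'] [DecidableEq A'] [Fintype B'] [DecidableEq B']
  [Fintype C'] [DecidableEq C']

/-- The tensor product `ρ ⊗ λ` of a state `ρ` on `H_A ⊗ H_B ⊗ H_C` and a state `λ`
on `H_{A'} ⊗ H_{B'} ⊗ H_{C'}`, viewed as a state on the tripartite system with
parts `AA' = H_A ⊗ H_{A'}`, `BB' = H_B ⊗ H_{B'}`, `CC' = H_C ⊗ H_{C'}`. -/
def tensorState (ρ : Matrix (A × B × C) (A × B × C) ℂ)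
    (l : Matrix (A' × B' × C') (A' × B' × C') ℂ) :
    Matrix ((A × A') × (B × B') × (C × C')) ((A × A') × (B × B') × (C × C')) ℂ :=
  fun x y =>
    ρ (x.1.1, x.2.1.1, x.2.2.1) (y.1.1, y.2.1.1, y.2.2.1) *
      l (x.1.2, x.2.1.2, x.2.2.2) (y.1.2, y.2.1.2, y.2.2.2)


/-! ### Auxiliary machinery -/

set_option linter.unusedSectionVars false

section MlogWellDefined

open Polynomial

variable {n : Type} [Fintype n] [DecidableEq n]

/-- Conjugation by a unitary matrix, as an `ℝ`-algebra homomorphism. -/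
def conjAlgHom (W : Matrix n n ℂ) (h1 : W * star W = 1) (h2 : star W * W = 1) :
    Matrix n n ℂ →ₐ[ℝ] Matrix n n ℂ where
  toFun X := W * X * star W
  map_one' := by show W * 1 * star W = 1; rw [mul_one, h1]
  map_mul' X Y := by
    show W * (X * Y) * star W = (W * X * star W) * (W * Y * star W)
    calc W * (X * Y) * star W = W * X * (star W * W) * Y * star W := by
          rw [h2, mul_one]; noncomm_ring
      _ = (W * X * star W) * (W * Y * star W) := by noncomm_ring
  map_zero' := by show W * 0 * star W = 0; simp
  map_add' X Y := by show W * (X + Y) * star W = _; rw [mul_add, add_mul]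
  commutes' r := by
    show W * algebraMap ℝ (Matrix n n ℂ) r * star W = _
    simp [Algebra.algebraMap_eq_smul_one, Matrix.mul_smul, Matrix.smul_mul, h1]

lemma aeval_diagonal (d : n → ℂ) (p : ℝ[X]) :
    aeval (Matrix.diagonal d) p = Matrix.diagonal (fun i => aeval (d i) p) := by
  have h := Polynomial.aeval_algHom_apply (Matrix.diagonalAlgHom (n := n) (α := ℂ) ℝ) d p
  simp only [Matrix.diagonalAlgHom_apply] at h
  have h2 : (aeval d p : n → ℂ) = fun i => aeval (d i) p :=
    funext fun i => (Polynomial.aeval_algHom_apply (Pi.evalAlgHom ℝ (fun _ => ℂ) i) d p).symm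
  rw [h, h2]

lemma aeval_coe_real (x : ℝ) (p : ℝ[X]) : aeval (x : ℂ) p = ((p.eval x : ℝ) : ℂ) := by
  rw [show (x : ℂ) = algebraMap ℝ ℂ x from rfl,
    Polynomial.aeval_algebraMap_apply_eq_algebraMap_eval]
  rfl

lemma aeval_conj (W : Matrix n n ℂ) (h1 : W * star W = 1) (h2 : star W * W = 1)
    (d : n → ℝ) (p : ℝ[X]) :
    aeval (W * Matrix.diagonal (fun i => (d i : ℂ)) * star W) p
      = W * Matrix.diagonal (fun i => ((p.eval (d i) : ℝ) : ℂ)) * star W := by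
  have h := Polynomial.aeval_algHom_apply (conjAlgHom W h1 h2)
    (Matrix.diagonal (fun i => (d i : ℂ))) p
  have hc : ∀ X, conjAlgHom W h1 h2 X = W * X * star W := fun _ => rfl
  rw [hc] at h
  have h3 : (fun i => aeval ((d i : ℂ)) p) = fun i => ((p.eval (d i) : ℝ) : ℂ) :=
    funext fun i => aeval_coe_real (d i) p
  rw [h, aeval_diagonal, h3, hc]

lemma isHermitian_of_spectral (W : Matrix n n ℂ) (δ : n → ℝ) :
    (W * Matrix.diagonal (fun i => (δ i : ℂ)) * star W).IsHermitian := by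
  have hD : (star (fun i => ((δ i : ℝ) : ℂ))) = (fun i => ((δ i : ℝ) : ℂ)) := by
    funext i; simp [Complex.conj_ofReal]
  unfold Matrix.IsHermitian
  rw [conjTranspose_mul, conjTranspose_mul, diagonal_conjTranspose, hD]
  simp only [Matrix.star_eq_conjTranspose, conjTranspose_conjTranspose]
  rw [mul_assoc]

/-- `mlog` is well defined: it can be computed from any unitary diagonalization with a real
diagonal. -/
lemma mlog_eq_of_spectral {M : Matrix n n ℂ} (W : Matrix n n ℂ)
    (h1 : W * star W = 1) (h2 : star W * W = 1) (δ : n → ℝ)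
    (hM : M = W * Matrix.diagonal (fun i => (δ i : ℂ)) * star W) :
    mlog M = W * Matrix.diagonal (fun i => (Real.log (δ i) : ℂ)) * star W := by
  have hH : M.IsHermitian := hM ▸ isHermitian_of_spectral W δ
  rw [mlog, dif_pos hH]
  set U : Matrix n n ℂ := (hH.eigenvectorUnitary : Matrix n n ℂ) with hUdef
  have hU1 : U * star U = 1 := (Matrix.mem_unitaryGroup_iff).mp hH.eigenvectorUnitary.2
  have hU2 : star U * U = 1 := (Matrix.mem_unitaryGroup_iff').mp hH.eigenvectorUnitary.2
  have hspec : M = U * Matrix.diagonal (fun i => (hH.eigenvalues i : ℂ)) * star U := by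
    have := hH.spectral_theorem; rw [Unitary.conjStarAlgAut_apply] at this; exact this
  set s : Finset ℝ :=
    (Finset.univ.image hH.eigenvalues) ∪ (Finset.univ.image δ) with hs
  set p : ℝ[X] := Lagrange.interpolate s id Real.log with hp
  have hps : ∀ x ∈ s, p.eval x = Real.log x := by
    intro x hx
    have := Lagrange.eval_interpolate_at_node Real.log (Set.injOn_id _) hx
    exact this
  have key : ∀ (V : Matrix n n ℂ), V * star V = 1 → star V * V = 1 →
      ∀ (d : n → ℝ), (∀ i, d i ∈ s) →
      M = V * Matrix.diagonal (fun i => (d i : ℂ)) * star V →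
      aeval M p = V * Matrix.diagonal (fun i => (Real.log (d i) : ℂ)) * star V := by
    intro V hV1 hV2 d hd hMV
    have hfun : (fun i => ((p.eval (d i) : ℝ) : ℂ)) = fun i => ((Real.log (d i) : ℝ) : ℂ) :=
      funext fun i => by rw [hps (d i) (hd i)]
    rw [hMV, aeval_conj V hV1 hV2 d p, hfun]
  have e1 := key U hU1 hU2 hH.eigenvalues
    (fun i => Finset.mem_union_left _ (Finset.mem_image_of_mem _ (Finset.mem_univ i))) hspec
  have e2 := key W h1 h2 δ
    (fun i => Finset.mem_union_right _ (Finset.mem_image_of_mem _ (Finset.mem_univ i))) hM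
  rw [← e1, e2]

end MlogWellDefined

set_option linter.unusedSectionVars false

section Kron

variable {a a' b b' : Type} [Fintype a] [DecidableEq a] [Fintype a'] [DecidableEq a']
  [Fintype b] [DecidableEq b] [Fintype b'] [DecidableEq b']

/-- Interleaved Kronecker product of two square matrices on pair index types. -/
def k2 (M : Matrix (a × b) (a × b) ℂ) (N : Matrix (a' × b') (a' × b') ℂ) :
    Matrix ((a × a') × (b × b')) ((a × a') × (b × b')) ℂ :=
  fun x y => M (x.1.1, x.2.1) (y.1.1, y.2.1) * N (x.1.2, x.2.2) (y.1.2, y.2.2)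

def mix2 : (a × b) × (a' × b') ≃ (a × a') × (b × b') where
  toFun p := ((p.1.1, p.2.1), (p.1.2, p.2.2))
  invFun q := ((q.1.1, q.2.1), (q.1.2, q.2.2))
  left_inv := by rintro ⟨⟨x, y⟩, ⟨x', y'⟩⟩; rfl
  right_inv := by rintro ⟨⟨x, x'⟩, ⟨y, y'⟩⟩; rfl

lemma k2_mul (M M' : Matrix (a × b) (a × b) ℂ) (N N' : Matrix (a' × b') (a' × b') ℂ) :
    k2 M N * k2 M' N' = k2 (M * M') (N * N') := by
  ext x y
  rw [Matrix.mul_apply]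
  calc ∑ j, k2 M N x j * k2 M' N' j y
      = ∑ p : (a × b) × (a' × b'), k2 M N x (mix2 p) * k2 M' N' (mix2 p) y :=
        (Equiv.sum_comp mix2 fun j => k2 M N x j * k2 M' N' j y).symm
    _ = ∑ j1 : a × b, ∑ j2 : a' × b',
          (M (x.1.1, x.2.1) j1 * M' j1 (y.1.1, y.2.1)) *
          (N (x.1.2, x.2.2) j2 * N' j2 (y.1.2, y.2.2)) := by
        rw [Fintype.sum_prod_type]
        refine Finset.sum_congr rfl fun j1 _ => Finset.sum_congr rfl fun j2 _ => ?_
        simp only [k2, mix2, Equiv.coe_fn_mk]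
        ring
    _ = (∑ j1 : a × b, M (x.1.1, x.2.1) j1 * M' j1 (y.1.1, y.2.1)) *
        (∑ j2 : a' × b', N (x.1.2, x.2.2) j2 * N' j2 (y.1.2, y.2.2)) := by
        rw [Finset.sum_mul_sum]
    _ = k2 (M * M') (N * N') x y := by simp only [k2, Matrix.mul_apply]

lemma k2_one : (k2 (1 : Matrix (a × b) (a × b) ℂ) (1 : Matrix (a' × b') (a' × b') ℂ)) = 1 := by
  ext ⟨⟨xa, xa'⟩, ⟨xb, xb'⟩⟩ ⟨⟨ya, ya'⟩, ⟨yb, yb'⟩⟩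
  simp only [k2, Matrix.one_apply, Prod.mk.injEq]
  by_cases h1 : xa = ya <;> by_cases h2 : xa' = ya' <;> by_cases h3 : xb = yb <;>
    by_cases h4 : xb' = yb' <;> simp [h1, h2, h3, h4]

lemma k2_star (M : Matrix (a × b) (a × b) ℂ) (N : Matrix (a' × b') (a' × b') ℂ) :
    star (k2 M N) = k2 (star M) (star N) := by
  ext x y
  show star (k2 M N y x) = _
  simp [k2, Matrix.star_eq_conjTranspose, Matrix.conjTranspose_apply, mul_comm]

lemma k2_diagonal (d : a × b → ℂ) (e : a' × b' → ℂ) :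
    k2 (Matrix.diagonal d) (Matrix.diagonal e)
      = Matrix.diagonal (fun x => d (x.1.1, x.2.1) * e (x.1.2, x.2.2)) := by
  ext ⟨⟨xa, xa'⟩, ⟨xb, xb'⟩⟩ ⟨⟨ya, ya'⟩, ⟨yb, yb'⟩⟩
  simp only [k2, Matrix.diagonal_apply, Prod.mk.injEq]
  by_cases h1 : xa = ya <;> by_cases h2 : xa' = ya' <;> by_cases h3 : xb = yb <;>
    by_cases h4 : xb' = yb' <;> simp [h1, h2, h3, h4]

lemma mlog_k2 (M : Matrix (a × b) (a × b) ℂ) (N : Matrix (a' × b') (a' × b') ℂ)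
    (hM : M.PosDef) (hN : N.PosDef) :
    mlog (k2 M N) = k2 (mlog M) 1 + k2 1 (mlog N) := by
  have hHM := hM.1
  have hHN := hN.1
  set U : Matrix (a × b) (a × b) ℂ := (hHM.eigenvectorUnitary : Matrix (a × b) (a × b) ℂ)
  set V : Matrix (a' × b') (a' × b') ℂ := (hHN.eigenvectorUnitary : Matrix (a' × b') (a' × b') ℂ)
  have hU1 : U * star U = 1 := (Matrix.mem_unitaryGroup_iff).mp hHM.eigenvectorUnitary.2
  have hU2 : star U * U = 1 := (Matrix.mem_unitaryGroup_iff').mp hHM.eigenvectorUnitary.2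
  have hV1 : V * star V = 1 := (Matrix.mem_unitaryGroup_iff).mp hHN.eigenvectorUnitary.2
  have hV2 : star V * V = 1 := (Matrix.mem_unitaryGroup_iff').mp hHN.eigenvectorUnitary.2
  have specM : M = U * Matrix.diagonal (fun i => (hHM.eigenvalues i : ℂ)) * star U := by
    have := hHM.spectral_theorem; rw [Unitary.conjStarAlgAut_apply] at this; exact this
  have specN : N = V * Matrix.diagonal (fun i => (hHN.eigenvalues i : ℂ)) * star V := by
    have := hHN.spectral_theorem; rw [Unitary.conjStarAlgAut_apply] at this; exact this
  set W := k2 U V with hW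
  have hWs : star W = k2 (star U) (star V) := k2_star U V
  have hW1 : W * star W = 1 := by rw [hWs, hW, k2_mul, hU1, hV1, k2_one]
  have hW2 : star W * W = 1 := by rw [hWs, hW, k2_mul, hU2, hV2, k2_one]
  set δ : ((a × a') × (b × b')) → ℝ :=
    fun x => hHM.eigenvalues (x.1.1, x.2.1) * hHN.eigenvalues (x.1.2, x.2.2) with hδ
  have hdiag : Matrix.diagonal (fun x => (δ x : ℂ))
      = k2 (Matrix.diagonal (fun i => (hHM.eigenvalues i : ℂ)))
           (Matrix.diagonal (fun i => (hHN.eigenvalues i : ℂ))) := by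
    rw [k2_diagonal]
    exact congrArg _ (funext fun x => by simp only [hδ]; push_cast; rfl)
  have hKM : k2 M N = W * Matrix.diagonal (fun x => (δ x : ℂ)) * star W := by
    rw [hdiag, hWs, hW, k2_mul, k2_mul, ← specM, ← specN]
  have hmain := mlog_eq_of_spectral W hW1 hW2 δ hKM
  have hsplit : (Matrix.diagonal (fun x => (Real.log (δ x) : ℂ)) :
        Matrix ((a × a') × (b × b')) ((a × a') × (b × b')) ℂ)
      = Matrix.diagonal
          (fun x : (a × a') × (b × b') => (Real.log (hHM.eigenvalues (x.1.1, x.2.1)) : ℂ))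
        + Matrix.diagonal
          (fun x : (a × a') × (b × b') => (Real.log (hHN.eigenvalues (x.1.2, x.2.2)) : ℂ)) := by
    rw [Matrix.diagonal_add]
    refine congrArg _ (funext fun x => ?_)
    simp only [hδ]
    rw [Real.log_mul (ne_of_gt (hM.eigenvalues_pos _)) (ne_of_gt (hN.eigenvalues_pos _))]
    push_cast
    rfl
  rw [hmain, hsplit, mul_add, add_mul]
  congr 1
  · have : Matrix.diagonal
        (fun x : (a × a') × (b × b') => (Real.log (hHM.eigenvalues (x.1.1, x.2.1)) : ℂ))
        = k2 (Matrix.diagonal (fun i => (Real.log (hHM.eigenvalues i) : ℂ))) 1 := by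
      rw [← Matrix.diagonal_one, k2_diagonal]
      exact congrArg _ (funext fun x => (mul_one _).symm)
    rw [this, hWs, hW, k2_mul, k2_mul]
    rw [mlog_eq_of_spectral U hU1 hU2 hHM.eigenvalues specM]
    rw [mul_one, hV1]
  · have : Matrix.diagonal
        (fun x : (a × a') × (b × b') => (Real.log (hHN.eigenvalues (x.1.2, x.2.2)) : ℂ))
        = k2 1 (Matrix.diagonal (fun i => (Real.log (hHN.eigenvalues i) : ℂ))) := by
      rw [← Matrix.diagonal_one, k2_diagonal]
      exact congrArg _ (funext fun x => (one_mul _).symm)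
    rw [this, hWs, hW, k2_mul, k2_mul]
    rw [mlog_eq_of_spectral V hV1 hV2 hHN.eigenvalues specN]
    rw [mul_one, hU1]

end Kron

lemma sum_rot {α β γ : Type} [Fintype α] [Fintype β] [Fintype γ] (f : α → β → γ → ℂ) :
    ∑ x : α, ∑ y : β, ∑ z : γ, f x y z = ∑ z : γ, ∑ x : α, ∑ y : β, f x y z :=
  (Finset.sum_congr rfl fun _ _ => Finset.sum_comm).trans Finset.sum_comm

lemma ptAB_posDef (ρ : Matrix (A × B × C) (A × B × C) ℂ) (hρ : ρ.PosDef) [Nonempty C] :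
    (ptAB ρ).PosDef := by
  refine posDef_iff_dotProduct_mulVec.mpr ⟨?_, ?_⟩
  · show (ptAB ρ)ᴴ = ptAB ρ
    ext p q
    rw [conjTranspose_apply]
    show star (ptAB ρ q p) = ptAB ρ p q
    simp only [ptAB, star_sum]
    refine Finset.sum_congr rfl fun c _ => ?_
    exact congrFun (congrFun hρ.1 (p.1, p.2, c)) (q.1, q.2, c)
  · intro x hx
    set z : C → (A × B × C) → ℂ := fun c i => if i.2.2 = c then x (i.1, i.2.1) else 0 with hz
    have hzdot : ∀ c : C, dotProduct (star (z c)) (ρ *ᵥ z c)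
        = ∑ p : A × B, ∑ q : A × B, star (x p) * (ρ (p.1, p.2, c) (q.1, q.2, c) * x q) := by
      intro c
      simp only [dotProduct, mulVec, hz, Pi.star_apply, Fintype.sum_prod_type,
        apply_ite (star : ℂ → ℂ), star_zero, ite_mul, zero_mul, mul_ite, mul_zero,
        Finset.mul_sum, Finset.sum_ite_irrel, Finset.sum_const_zero,
        Finset.sum_ite_eq', Finset.mem_univ, if_true]
    have hsum : dotProduct (star x) (ptAB ρ *ᵥ x)
        = ∑ c : C, dotProduct (star (z c)) (ρ *ᵥ (z c)) := by
      have h1 : ∑ c : C, dotProduct (star (z c)) (ρ *ᵥ (z c))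
          = ∑ c : C, ∑ p : A × B, ∑ q : A × B,
              star (x p) * (ρ (p.1, p.2, c) (q.1, q.2, c) * x q) :=
        Finset.sum_congr rfl fun c _ => hzdot c
      rw [h1]
      simp only [dotProduct, mulVec, ptAB, Pi.star_apply, Finset.mul_sum, Finset.sum_mul,
        mul_assoc]
      exact sum_rot _
    rw [hsum]
    obtain ⟨p0, hp0⟩ : ∃ p, x p ≠ 0 := by
      by_contra h
      push_neg at h
      exact hx (funext h)
    obtain ⟨c0⟩ := ‹Nonempty C›
    have hnz : z c0 ≠ 0 := by
      intro h
      apply hp0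
      have := congrFun h (p0.1, p0.2, c0)
      simpa [hz] using this
    refine Finset.sum_pos' (fun c _ => (hρ.posSemidef.dotProduct_mulVec_nonneg (z c))) ⟨c0, Finset.mem_univ c0, ?_⟩
    exact hρ.dotProduct_mulVec_pos hnz

lemma ptBC_posDef (ρ : Matrix (A × B × C) (A × B × C) ℂ) (hρ : ρ.PosDef) [Nonempty A] :
    (ptBC ρ).PosDef := by
  refine posDef_iff_dotProduct_mulVec.mpr ⟨?_, ?_⟩
  · show (ptBC ρ)ᴴ = ptBC ρ
    ext p q
    rw [conjTranspose_apply]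
    show star (ptBC ρ q p) = ptBC ρ p q
    simp only [ptBC, star_sum]
    refine Finset.sum_congr rfl fun a _ => ?_
    exact congrFun (congrFun hρ.1 (a, p.1, p.2)) (a, q.1, q.2)
  · intro x hx
    set z : A → (A × B × C) → ℂ := fun a i => if i.1 = a then x i.2 else 0 with hz
    have hzdot : ∀ a : A, dotProduct (star (z a)) (ρ *ᵥ z a)
        = ∑ p : B × C, ∑ q : B × C, star (x p) * (ρ (a, p.1, p.2) (a, q.1, q.2) * x q) := by
      intro a
      simp only [dotProduct, mulVec, hz, Pi.star_apply, Fintype.sum_prod_type,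
        apply_ite (star : ℂ → ℂ), star_zero, ite_mul, zero_mul, mul_ite, mul_zero,
        Finset.mul_sum, Finset.sum_ite_irrel, Finset.sum_const_zero,
        Finset.sum_ite_eq', Finset.mem_univ, if_true]
    have hsum : dotProduct (star x) (ptBC ρ *ᵥ x)
        = ∑ a : A, dotProduct (star (z a)) (ρ *ᵥ (z a)) := by
      have h1 : ∑ a : A, dotProduct (star (z a)) (ρ *ᵥ (z a))
          = ∑ a : A, ∑ p : B × C, ∑ q : B × C,
              star (x p) * (ρ (a, p.1, p.2) (a, q.1, q.2) * x q) :=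
        Finset.sum_congr rfl fun a _ => hzdot a
      rw [h1]
      simp only [dotProduct, mulVec, ptBC, Pi.star_apply, Finset.mul_sum, Finset.sum_mul,
        mul_assoc]
      exact sum_rot _
    rw [hsum]
    obtain ⟨p0, hp0⟩ : ∃ p, x p ≠ 0 := by
      by_contra h
      push_neg at h
      exact hx (funext h)
    obtain ⟨a0⟩ := ‹Nonempty A›
    have hnz : z a0 ≠ 0 := by
      intro h
      apply hp0
      have := congrFun h (a0, p0)
      simpa [hz] using this
    refine Finset.sum_pos' (fun a _ => (hρ.posSemidef.dotProduct_mulVec_nonneg (z a))) ⟨a0, Finset.mem_univ a0, ?_⟩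
    exact hρ.dotProduct_mulVec_pos hnz

section Tensor

variable {A' B' C' : Type} [Fintype A'] [DecidableEq A'] [Fintype B'] [DecidableEq B']
  [Fintype C'] [DecidableEq C']

def mix : (A × B × C) × (A' × B' × C') ≃ (A × A') × (B × B') × (C × C') where
  toFun p := ((p.1.1, p.2.1), (p.1.2.1, p.2.2.1), (p.1.2.2, p.2.2.2))
  invFun q := ((q.1.1, q.2.1.1, q.2.2.1), (q.1.2, q.2.1.2, q.2.2.2))
  left_inv := by rintro ⟨⟨a, b, c⟩, ⟨a', b', c'⟩⟩; rfl
  right_inv := by rintro ⟨⟨a, a'⟩, ⟨b, b'⟩, ⟨c, c'⟩⟩; rfl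

lemma tensorState_mul (M P : Matrix (A × B × C) (A × B × C) ℂ)
    (N Q : Matrix (A' × B' × C') (A' × B' × C') ℂ) :
    tensorState M N * tensorState P Q = tensorState (M * P) (N * Q) := by
  ext x y
  rw [Matrix.mul_apply]
  calc ∑ j, tensorState M N x j * tensorState P Q j y
      = ∑ p : (A × B × C) × (A' × B' × C'),
          tensorState M N x (mix p) * tensorState P Q (mix p) y :=
        (Equiv.sum_comp mix fun j => tensorState M N x j * tensorState P Q j y).symm
    _ = ∑ j1 : A × B × C, ∑ j2 : A' × B' × C',
          (M (x.1.1, x.2.1.1, x.2.2.1) j1 * P j1 (y.1.1, y.2.1.1, y.2.2.1)) *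
          (N (x.1.2, x.2.1.2, x.2.2.2) j2 * Q j2 (y.1.2, y.2.1.2, y.2.2.2)) := by
        rw [Fintype.sum_prod_type]
        refine Finset.sum_congr rfl fun j1 _ => Finset.sum_congr rfl fun j2 _ => ?_
        simp only [tensorState, mix, Equiv.coe_fn_mk]
        ring
    _ = (∑ j1 : A × B × C, M (x.1.1, x.2.1.1, x.2.2.1) j1 * P j1 (y.1.1, y.2.1.1, y.2.2.1)) *
        (∑ j2 : A' × B' × C', N (x.1.2, x.2.1.2, x.2.2.2) j2 * Q j2 (y.1.2, y.2.1.2, y.2.2.2)) := by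
        rw [Finset.sum_mul_sum]
    _ = tensorState (M * P) (N * Q) x y := by simp only [tensorState, Matrix.mul_apply]

lemma tensorState_trace (M : Matrix (A × B × C) (A × B × C) ℂ)
    (N : Matrix (A' × B' × C') (A' × B' × C') ℂ) :
    (tensorState M N).trace = M.trace * N.trace := by
  rw [Matrix.trace, Matrix.trace, Matrix.trace]
  calc ∑ x, (tensorState M N).diag x
      = ∑ p : (A × B × C) × (A' × B' × C'), (tensorState M N).diag (mix p) :=
        (Equiv.sum_comp mix _).symm
    _ = ∑ j1 : A × B × C, ∑ j2 : A' × B' × C', M j1 j1 * N j2 j2 := by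
        rw [Fintype.sum_prod_type]
        refine Finset.sum_congr rfl fun j1 _ => Finset.sum_congr rfl fun j2 _ => ?_
        simp only [Matrix.diag, tensorState, mix, Equiv.coe_fn_mk]
    _ = (∑ j1 : A × B × C, M j1 j1) * (∑ j2 : A' × B' × C', N j2 j2) := by
        rw [Finset.sum_mul_sum]
    _ = _ := by simp [Matrix.diag]

lemma tensorState_sub_left (M M' : Matrix (A × B × C) (A × B × C) ℂ)
    (N : Matrix (A' × B' × C') (A' × B' × C') ℂ) :
    tensorState (M - M') N = tensorState M N - tensorState M' N := by
  ext x y; simp [tensorState, sub_mul]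

lemma tensorState_sub_right (M : Matrix (A × B × C) (A × B × C) ℂ)
    (N N' : Matrix (A' × B' × C') (A' × B' × C') ℂ) :
    tensorState M (N - N') = tensorState M N - tensorState M N' := by
  ext x y; simp [tensorState, mul_sub]

lemma ptAB_tensor (ρ : Matrix (A × B × C) (A × B × C) ℂ)
    (l : Matrix (A' × B' × C') (A' × B' × C') ℂ) :
    ptAB (tensorState ρ l) = k2 (ptAB ρ) (ptAB l) := by
  ext p q
  simp only [ptAB, tensorState, k2]
  rw [Finset.sum_mul_sum]
  rw [Fintype.sum_prod_type]

lemma ptBC_tensor (ρ : Matrix (A × B × C) (A × B × C) ℂ)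
    (l : Matrix (A' × B' × C') (A' × B' × C') ℂ) :
    ptBC (tensorState ρ l) = k2 (ptBC ρ) (ptBC l) := by
  ext p q
  simp only [ptBC, tensorState, k2]
  rw [Finset.sum_mul_sum]
  rw [Fintype.sum_prod_type]

lemma embAB_one : (embAB (1 : Matrix (A × B) (A × B) ℂ) : Matrix (A × B × C) (A × B × C) ℂ) = 1 := by
  ext x y
  simp only [embAB, Matrix.one_apply, Prod.ext_iff, Prod.mk.injEq]
  by_cases h1 : x.1 = y.1 <;> by_cases h2 : x.2.1 = y.2.1 <;> by_cases h3 : x.2.2 = y.2.2 <;>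
    simp [h1, h2, h3]

lemma embBC_one : (embBC (1 : Matrix (B × C) (B × C) ℂ) : Matrix (A × B × C) (A × B × C) ℂ) = 1 := by
  ext x y
  simp only [embBC, Matrix.one_apply, Prod.ext_iff, Prod.mk.injEq]
  by_cases h1 : x.1 = y.1 <;> by_cases h2 : x.2.1 = y.2.1 <;> by_cases h3 : x.2.2 = y.2.2 <;>
    simp [h1, h2, h3]

lemma embAB_add (M N : Matrix (A × B) (A × B) ℂ) :
    (embAB (M + N) : Matrix (A × B × C) (A × B × C) ℂ) = embAB M + embAB N := by
  ext x y
  simp only [embAB, Matrix.add_apply]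
  by_cases h : x.2.2 = y.2.2 <;> simp [h]

lemma embBC_add (M N : Matrix (B × C) (B × C) ℂ) :
    (embBC (M + N) : Matrix (A × B × C) (A × B × C) ℂ) = embBC M + embBC N := by
  ext x y
  simp only [embBC, Matrix.add_apply]
  by_cases h : x.1 = y.1 <;> simp [h]

lemma embAB_k2 (M : Matrix (A × B) (A × B) ℂ) (N : Matrix (A' × B') (A' × B') ℂ) :
    (embAB (k2 M N) : Matrix ((A × A') × (B × B') × (C × C')) ((A × A') × (B × B') × (C × C')) ℂ)
      = tensorState (embAB M) (embAB N) := by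
  ext x y
  simp only [embAB, k2, tensorState]
  by_cases h1 : x.2.2.1 = y.2.2.1 <;> by_cases h2 : x.2.2.2 = y.2.2.2
  · have h : x.2.2 = y.2.2 := Prod.ext h1 h2
    simp [h, h1, h2]
  · have h : x.2.2 ≠ y.2.2 := fun h => h2 (congrArg Prod.snd h)
    simp [h, h1, h2]
  · have h : x.2.2 ≠ y.2.2 := fun h => h1 (congrArg Prod.fst h)
    simp [h, h1, h2]
  · have h : x.2.2 ≠ y.2.2 := fun h => h1 (congrArg Prod.fst h)
    simp [h, h1, h2]

lemma embBC_k2 (M : Matrix (B × C) (B × C) ℂ) (N : Matrix (B' × C') (B' × C') ℂ) :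
    (embBC (k2 M N) : Matrix ((A × A') × (B × B') × (C × C')) ((A × A') × (B × B') × (C × C')) ℂ)
      = tensorState (embBC M) (embBC N) := by
  ext x y
  simp only [embBC, k2, tensorState]
  by_cases h1 : x.1.1 = y.1.1 <;> by_cases h2 : x.1.2 = y.1.2
  · have h : x.1 = y.1 := Prod.ext h1 h2
    simp [h, h1, h2]
  · have h : x.1 ≠ y.1 := fun h => h2 (congrArg Prod.snd h)
    simp [h, h1, h2]
  · have h : x.1 ≠ y.1 := fun h => h1 (congrArg Prod.fst h)
    simp [h, h1, h2]
  · have h : x.1 ≠ y.1 := fun h => h1 (congrArg Prod.fst h)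
    simp [h, h1, h2]

lemma k2_neg_left {a a' b b' : Type} [Fintype a] [DecidableEq a] [Fintype a'] [DecidableEq a']
    [Fintype b] [DecidableEq b] [Fintype b'] [DecidableEq b']
    (M : Matrix (a × b) (a × b) ℂ) (N : Matrix (a' × b') (a' × b') ℂ) :
    k2 (-M) N = -(k2 M N) := by
  ext x y; simp [k2]

lemma k2_neg_right {a a' b b' : Type} [Fintype a] [DecidableEq a] [Fintype a'] [DecidableEq a']
    [Fintype b] [DecidableEq b] [Fintype b'] [DecidableEq b']
    (M : Matrix (a × b) (a × b) ℂ) (N : Matrix (a' × b') (a' × b') ℂ) :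
    k2 M (-N) = -(k2 M N) := by
  ext x y; simp [k2]

lemma KAB_tensor (ρ : Matrix (A × B × C) (A × B × C) ℂ)
    (l : Matrix (A' × B' × C') (A' × B' × C') ℂ)
    (hρ : (ptAB ρ).PosDef) (hl : (ptAB l).PosDef) :
    KAB (tensorState ρ l) = tensorState (KAB ρ) 1 + tensorState 1 (KAB l) := by
  rw [KAB, ptAB_tensor, mlog_k2 _ _ hρ hl, neg_add, ← k2_neg_left, ← k2_neg_right,
    embAB_add, embAB_k2, embAB_k2, embAB_one, embAB_one]
  rfl

lemma KBC_tensor (ρ : Matrix (A × B × C) (A × B × C) ℂ)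
    (l : Matrix (A' × B' × C') (A' × B' × C') ℂ)
    (hρ : (ptBC ρ).PosDef) (hl : (ptBC l).PosDef) :
    KBC (tensorState ρ l) = tensorState (KBC ρ) 1 + tensorState 1 (KBC l) := by
  rw [KBC, ptBC_tensor, mlog_k2 _ _ hρ hl, neg_add, ← k2_neg_left, ← k2_neg_right,
    embBC_add, embBC_k2, embBC_k2, embBC_one, embBC_one]
  rfl

end Tensor

/-- The modular commutator is additive under tensor products: if
`ρ` is a positive definite density matrix on `H_A ⊗ H_B ⊗ H_C` and `λ` is a
positive definite density matrix on `H_{A'} ⊗ H_{B'} ⊗ H_{C'}`, then for the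
state `ρ ⊗ λ` on the composite system,
`J(AA', BB', CC')_{ρ⊗λ} = J(A,B,C)_ρ + J(A',B',C')_λ`. -/
theorem modular_commutator_additive
    (ρ : Matrix (A × B × C) (A × B × C) ℂ)
    (l : Matrix (A' × B' × C') (A' × B' × C') ℂ)
    (hρ : ρ.PosDef) (hTrρ : ρ.trace = 1)
    (hl : l.PosDef) (hTrl : l.trace = 1) :
    Jmod (tensorState ρ l) = Jmod ρ + Jmod l := by
  -- nonemptiness of the factors
  have hne : Nonempty (A × B × C) := by
    by_contra h
    rw [not_nonempty_iff] at h
    rw [Matrix.trace, Finset.univ_eq_empty, Finset.sum_empty] at hTrρ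
    exact one_ne_zero hTrρ.symm
  have hne' : Nonempty (A' × B' × C') := by
    by_contra h
    rw [not_nonempty_iff] at h
    rw [Matrix.trace, Finset.univ_eq_empty, Finset.sum_empty] at hTrl
    exact one_ne_zero hTrl.symm
  haveI : Nonempty A := ⟨hne.some.1⟩
  haveI : Nonempty C := ⟨hne.some.2.2⟩
  haveI : Nonempty A' := ⟨hne'.some.1⟩
  haveI : Nonempty C' := ⟨hne'.some.2.2⟩
  have hKAB := KAB_tensor ρ l (ptAB_posDef ρ hρ) (ptAB_posDef l hl)
  have hKBC := KBC_tensor ρ l (ptBC_posDef ρ hρ) (ptBC_posDef l hl)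
  set K1 := KAB ρ
  set K2 := KBC ρ
  set L1 := KAB l
  set L2 := KBC l
  have hcomm : KAB (tensorState ρ l) * KBC (tensorState ρ l)
        - KBC (tensorState ρ l) * KAB (tensorState ρ l)
      = tensorState (K1 * K2 - K2 * K1) 1 + tensorState 1 (L1 * L2 - L2 * L1) := by
    rw [hKAB, hKBC]
    simp only [add_mul, mul_add, tensorState_mul, one_mul, mul_one]
    rw [tensorState_sub_left, tensorState_sub_right]
    abel
  rw [Jmod, hcomm, mul_add, tensorState_mul, tensorState_mul]
  simp only [Matrix.mul_one]
  rw [Matrix.trace_add, tensorState_trace, tensorState_trace, hTrρ, hTrl]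
  rw [Jmod, Jmod]
  ring


end ModularCommutator
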